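/- The map sending a group homomorphism ρ : Λ → U(1) to the class of c(s) in ℂ^d / Λ_c, where s = (s_1, …, s_{2d}) ∈ (iℝ)^{2d} is any vector of purely imaginary complex numbers with exp(s_k) = ρ(λ_k) for k = 1, …, 2d, is well defined (independent of the choice of the logarithms s_k) and is an isomorphism of abelian groups from Hom(Λ, U(1)) (with pointwise multiplication) onto the quotient group ℂ^d / Λ_c. -/

import Mathlib

/-- The real `(2d)×(2d)` matrix `A_Λ` whose `k`-th row is
`(Re((λ_k)_1), …, Re((λ_k)_d), Im((λ_k)_1), …, Im((λ_k)_d))`. -/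
noncomputable def AΛ (d : ℕ) (lam : Fin (d + d) → Fin d → ℂ) :
    Matrix (Fin (d + d)) (Fin (d + d)) ℝ :=
  fun k j =>
    Fin.addCases (motive := fun _ => ℝ) (fun i => (lam k i).re) (fun i => (lam k i).im) j

/-- The `ℝ`-linear map `B(a_1,…,a_d,b_1,…,b_d) := ((a_1 + i b_1)/2, …, (a_d + i b_d)/2)`. -/
noncomputable def Bmap (d : ℕ) (v : Fin (d + d) → ℝ) : Fin d → ℂ :=
  fun j => ((v (Fin.castAdd d j) : ℂ) + Complex.I * (v (Fin.natAdd d j) : ℂ)) / 2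

/-- For a vector `s` of purely imaginary complex numbers, `c(s) := i·B(A_Λ⁻¹(−i s)) ∈ ℂ^d`. -/
noncomputable def cmap (d : ℕ) (lam : Fin (d + d) → Fin d → ℂ)
    (s : Fin (d + d) → ℂ) : Fin d → ℂ :=
  fun j => Complex.I *
    Bmap d ((AΛ d lam)⁻¹.mulVec (fun k => ((-Complex.I) * s k).re)) j

/-- The lattice `Λ := ℤλ_1 + ⋯ + ℤλ_{2d}`, as an additive subgroup of `ℂ^d`. -/
noncomputable def LamSubgroup (d : ℕ) (lam : Fin (d + d) → Fin d → ℂ) : AddSubgroup (Fin d → ℂ) :=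
  AddSubgroup.closure (Set.range lam)

/-- The lattice `Λ_c := c(2πi ℤ^{2d})`, as an additive subgroup of `ℂ^d`. -/
noncomputable def LamC (d : ℕ) (lam : Fin (d + d) → Fin d → ℂ) : AddSubgroup (Fin d → ℂ) :=
  AddSubgroup.closure
    {z : Fin d → ℂ | ∃ n : Fin (d + d) → ℤ,
      z = cmap d lam (fun k => 2 * Real.pi * Complex.I * (n k : ℂ))}

namespace HomQuotAux

open Complex

variable (d : ℕ)

/-- Realification of `ℂ^d` as `ℝ^{2d}`. -/
noncomputable def phiLM : (Fin d → ℂ) →ₗ[ℝ] (Fin (d + d) → ℝ) where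
  toFun v := fun k =>
    Fin.addCases (motive := fun _ => ℝ) (fun i => (v i).re) (fun i => (v i).im) k
  map_add' v w := by
    funext k
    induction k using Fin.addCases with
    | left i => simp only [Fin.addCases_left, Pi.add_apply, Complex.add_re]
    | right i => simp only [Fin.addCases_right, Pi.add_apply, Complex.add_im]
  map_smul' r v := by
    funext k
    induction k using Fin.addCases with
    | left i => simp only [Fin.addCases_left, Pi.smul_apply, Complex.smul_re,
        smul_eq_mul, RingHom.id_apply]
    | right i => simp only [Fin.addCases_right, Pi.smul_apply, Complex.smul_im,
        smul_eq_mul, RingHom.id_apply]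

lemma phiLM_injective : Function.Injective (phiLM d) := by
  intro v w h
  funext j
  have h1 := congrFun h (Fin.castAdd d j)
  have h2 := congrFun h (Fin.natAdd d j)
  simp only [phiLM, LinearMap.coe_mk, AddHom.coe_mk, Fin.addCases_left,
    Fin.addCases_right] at h1 h2
  exact Complex.ext h1 h2

variable (lam : Fin (d + d) → Fin d → ℂ)

lemma isUnit_AΛ (hlam : LinearIndependent ℝ lam) : IsUnit (AΛ d lam) := by
  rw [← Matrix.linearIndependent_rows_iff_isUnit]
  have h : (AΛ d lam).row = (phiLM d) ∘ lam := rfl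
  rw [h]
  exact hlam.map' (phiLM d) (LinearMap.ker_eq_bot.mpr (phiLM_injective d))

/-- The map `L(t) = c(it)`. -/
noncomputable def Lfun (t : Fin (d + d) → ℝ) : Fin d → ℂ :=
  cmap d lam fun k => Complex.I * (t k : ℂ)

lemma Lfun_eq (t : Fin (d + d) → ℝ) :
    Lfun d lam t = fun j => Complex.I * Bmap d ((AΛ d lam)⁻¹.mulVec t) j := by
  unfold Lfun cmap
  have h : (fun k => ((-Complex.I) * (Complex.I * (t k : ℂ))).re) = t := by
    funext k
    simp [← mul_assoc]
  rw [h]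

lemma cmap_eq_Lfun (s : Fin (d + d) → ℂ) (hre : ∀ k, (s k).re = 0) :
    cmap d lam s = Lfun d lam (fun k => (s k).im) := by
  unfold Lfun
  refine congrArg (cmap d lam) ?_
  funext k
  apply Complex.ext <;> simp [hre k]

lemma Lfun_add (t t' : Fin (d + d) → ℝ) :
    Lfun d lam (t + t') = Lfun d lam t + Lfun d lam t' := by
  rw [Lfun_eq, Lfun_eq, Lfun_eq, Matrix.mulVec_add]
  funext j
  simp only [Bmap, Pi.add_apply]
  push_cast
  ring

lemma helper1 (a b : ℝ) :
    ((-2 : ℂ) * Complex.I * (Complex.I * (((a : ℂ) + Complex.I * (b : ℂ)) / 2)))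
      = (a : ℂ) + Complex.I * b := by
  linear_combination (-(a : ℂ) - Complex.I * b) * Complex.I_mul_I

/-- Inverse of `L`. -/
noncomputable def invLfun (z : Fin d → ℂ) : Fin (d + d) → ℝ :=
  (AΛ d lam).mulVec (phiLM d fun j => (-2) * Complex.I * z j)

lemma invLfun_add (z z' : Fin d → ℂ) :
    invLfun d lam (z + z') = invLfun d lam z + invLfun d lam z' := by
  unfold invLfun
  have h : (fun j => (-2 : ℂ) * Complex.I * (z + z') j)
      = (fun j => (-2 : ℂ) * Complex.I * z j) + (fun j => (-2 : ℂ) * Complex.I * z' j) := by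
    funext j
    simp only [Pi.add_apply]
    ring
  rw [h, map_add, Matrix.mulVec_add]

lemma left_inv (hlam : LinearIndependent ℝ lam) (t : Fin (d + d) → ℝ) :
    invLfun d lam (Lfun d lam t) = t := by
  have hdet : IsUnit (AΛ d lam).det :=
    (Matrix.isUnit_iff_isUnit_det _).mp (isUnit_AΛ d lam hlam)
  have key : (phiLM d fun j => (-2) * Complex.I * Lfun d lam t j)
      = (AΛ d lam)⁻¹.mulVec t := by
    rw [Lfun_eq]
    funext k
    induction k using Fin.addCases with
    | left i =>
        simp only [phiLM, LinearMap.coe_mk, AddHom.coe_mk, Fin.addCases_left, Bmap]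
        rw [helper1]
        simp
    | right i =>
        simp only [phiLM, LinearMap.coe_mk, AddHom.coe_mk, Fin.addCases_right, Bmap]
        rw [helper1]
        simp
  unfold invLfun
  rw [key, Matrix.mulVec_mulVec, Matrix.mul_nonsing_inv _ hdet, Matrix.one_mulVec]

lemma right_inv (hlam : LinearIndependent ℝ lam) (z : Fin d → ℂ) :
    Lfun d lam (invLfun d lam z) = z := by
  have hdet : IsUnit (AΛ d lam).det :=
    (Matrix.isUnit_iff_isUnit_det _).mp (isUnit_AΛ d lam hlam)
  rw [Lfun_eq]
  unfold invLfun
  rw [Matrix.mulVec_mulVec, Matrix.nonsing_inv_mul _ hdet, Matrix.one_mulVec]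
  funext j
  simp only [Bmap, phiLM, LinearMap.coe_mk, AddHom.coe_mk, Fin.addCases_left,
    Fin.addCases_right]
  rw [show (((((-2) * Complex.I * z j).re : ℝ) : ℂ)
      + Complex.I * ((((-2) * Complex.I * z j).im : ℝ) : ℂ))
      = (-2) * Complex.I * z j by
    rw [mul_comm Complex.I]; exact Complex.re_add_im _]
  linear_combination (-(z j)) * Complex.I_mul_I

variable (hlam : LinearIndependent ℝ lam)
  (hspan : Submodule.span ℝ (Set.range lam) = ⊤)

/-- `lam` as a basis of `ℂ^d` over `ℝ`. -/
noncomputable def bas : Module.Basis (Fin (d + d)) ℝ (Fin d → ℂ) := Module.Basis.mk hlam hspan.ge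

/-- The character of `Λ` attached to `t ∈ ℝ^{2d}`. -/
noncomputable def chi (t : Fin (d + d) → ℝ) : AddChar (LamSubgroup d lam) Circle where
  toFun x := Circle.exp (∑ k, (bas d lam hlam hspan).repr (x : Fin d → ℂ) k * t k)
  map_zero_eq_one' := by
    simp only [ZeroMemClass.coe_zero, map_zero, Finsupp.coe_zero, Pi.zero_apply,
      zero_mul, Finset.sum_const_zero, Circle.exp_zero]
  map_add_eq_mul' x y := by
    rw [← Circle.exp_add, ← Finset.sum_add_distrib]
    refine congrArg Circle.exp (Finset.sum_congr rfl fun k _ => ?_)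
    have h : ((x + y : LamSubgroup d lam) : Fin d → ℂ)
        = (x : Fin d → ℂ) + (y : Fin d → ℂ) := rfl
    rw [h, map_add, Finsupp.add_apply, add_mul]

lemma chi_add (t t' : Fin (d + d) → ℝ) :
    chi d lam hlam hspan (t + t') = chi d lam hlam hspan t * chi d lam hlam hspan t' := by
  apply AddChar.ext
  intro x
  rw [AddChar.mul_apply]
  show Circle.exp _ = Circle.exp _ * Circle.exp _
  rw [← Circle.exp_add, ← Finset.sum_add_distrib]
  refine congrArg Circle.exp (Finset.sum_congr rfl fun k _ => ?_)
  simp only [Pi.add_apply]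
  ring

lemma chi_apply_lam (t : Fin (d + d) → ℝ) (k : Fin (d + d))
    (hk : lam k ∈ LamSubgroup d lam) :
    chi d lam hlam hspan t ⟨lam k, hk⟩ = Circle.exp (t k) := by
  show Circle.exp (∑ j, (bas d lam hlam hspan).repr (lam k) j * t j) = _
  refine congrArg Circle.exp ?_
  rw [show lam k = bas d lam hlam hspan k from (Module.Basis.mk_apply hlam hspan.ge k).symm,
    Module.Basis.repr_self]
  simp [Finsupp.single_apply, ite_mul]

lemma char_ext (ρ₁ ρ₂ : AddChar (LamSubgroup d lam) Circle)
    (h : ∀ k (hk : lam k ∈ LamSubgroup d lam), ρ₁ ⟨lam k, hk⟩ = ρ₂ ⟨lam k, hk⟩) :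
    ρ₁ = ρ₂ := by
  apply AddChar.ext
  rintro ⟨x, hx⟩
  induction hx using AddSubgroup.closure_induction with
  | mem x hx =>
      obtain ⟨k, rfl⟩ := hx
      exact h k _
  | zero => show ρ₁ 0 = ρ₂ 0; simp
  | add x y hx hy ihx ihy =>
      show ρ₁ (⟨x, hx⟩ + ⟨y, hy⟩) = ρ₂ (⟨x, hx⟩ + ⟨y, hy⟩)
      rw [AddChar.map_add_eq_mul, AddChar.map_add_eq_mul, ihx, ihy]
  | neg x hx ihx =>
      show ρ₁ (-⟨x, hx⟩) = ρ₂ (-⟨x, hx⟩)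
      rw [AddChar.map_neg_eq_inv, AddChar.map_neg_eq_inv, ihx]

end HomQuotAux

theorem hom_to_quotient_iso (d : ℕ) (hd : 0 < d)
    (lam : Fin (d + d) → Fin d → ℂ)
    (hlam : LinearIndependent ℝ lam)
    (hspan : Submodule.span ℝ (Set.range lam) = ⊤) :
    ∃ Φ : Additive (AddChar (LamSubgroup d lam) Circle) ≃+
        ((Fin d → ℂ) ⧸ LamC d lam),
      ∀ (ρ : AddChar (LamSubgroup d lam) Circle) (s : Fin (d + d) → ℂ),
        (∀ k, (s k).re = 0) →
        (∀ k, Complex.exp (s k) =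
          (ρ ⟨lam k, AddSubgroup.subset_closure (Set.mem_range_self k)⟩ : ℂ)) →
        Φ (Additive.ofMul ρ) = QuotientAddGroup.mk (cmap d lam s) := by
  classical
  have hmem : ∀ k, lam k ∈ LamSubgroup d lam := fun k =>
    AddSubgroup.subset_closure (Set.mem_range_self k)
  -- the homomorphism Θ
  let Θ : (Fin d → ℂ) →+ Additive (AddChar (LamSubgroup d lam) Circle) :=
    AddMonoidHom.mk' (fun z =>
        Additive.ofMul (HomQuotAux.chi d lam hlam hspan (HomQuotAux.invLfun d lam z)))
      (by
        intro z z'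
        rw [HomQuotAux.invLfun_add, HomQuotAux.chi_add]
        rfl)
  have hΘ : ∀ z, Θ z = Additive.ofMul
      (HomQuotAux.chi d lam hlam hspan (HomQuotAux.invLfun d lam z)) := fun z => rfl
  have hΘL : ∀ t, Θ (HomQuotAux.Lfun d lam t)
      = Additive.ofMul (HomQuotAux.chi d lam hlam hspan t) := by
    intro t
    rw [hΘ, HomQuotAux.left_inv d lam hlam]
  -- surjectivity
  have hsurj : Function.Surjective Θ := by
    intro ρ'
    set ρ := Additive.toMul ρ' with hρ
    refine ⟨HomQuotAux.Lfun d lam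
      (fun k => Complex.arg (ρ ⟨lam k, hmem k⟩ : ℂ)), ?_⟩
    rw [hΘL]
    have h : HomQuotAux.chi d lam hlam hspan
        (fun k => Complex.arg (ρ ⟨lam k, hmem k⟩ : ℂ)) = ρ := by
      apply HomQuotAux.char_ext d lam
      intro k hk
      rw [HomQuotAux.chi_apply_lam]
      exact Circle.exp_arg _
    rw [h, hρ]
    rfl
  -- the subgroup hom giving Λ_c
  have hgen : ∀ n : Fin (d + d) → ℤ,
      cmap d lam (fun k => 2 * Real.pi * Complex.I * (n k : ℂ))
        = HomQuotAux.Lfun d lam (fun k => 2 * Real.pi * (n k : ℝ)) := by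
    intro n
    unfold HomQuotAux.Lfun
    refine congrArg (cmap d lam) ?_
    funext k
    push_cast
    ring
  let g : (Fin (d + d) → ℤ) →+ (Fin d → ℂ) :=
    AddMonoidHom.mk' (fun n => HomQuotAux.Lfun d lam (fun k => 2 * Real.pi * (n k : ℝ)))
      (by
        intro n n'
        rw [← HomQuotAux.Lfun_add]
        refine congrArg (HomQuotAux.Lfun d lam) ?_
        funext k
        simp only [Pi.add_apply]
        push_cast
        ring)
  have hg : ∀ n, g n = HomQuotAux.Lfun d lam (fun k => 2 * Real.pi * (n k : ℝ)) :=
    fun n => rfl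
  have hLamC : LamC d lam = g.range := by
    have hS : {z : Fin d → ℂ | ∃ n : Fin (d + d) → ℤ,
        z = cmap d lam (fun k => 2 * Real.pi * Complex.I * (n k : ℂ))}
        = (g.range : Set (Fin d → ℂ)) := by
      ext z
      simp only [Set.mem_setOf_eq, SetLike.mem_coe, AddMonoidHom.mem_range]
      constructor
      · rintro ⟨n, rfl⟩
        exact ⟨n, ((hg n).trans (hgen n).symm)⟩
      · rintro ⟨n, rfl⟩
        exact ⟨n, ((hg n).trans (hgen n).symm)⟩
    rw [LamC, hS, AddSubgroup.closure_eq]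
  -- kernel
  have hker : Θ.ker = LamC d lam := by
    rw [hLamC]
    ext z
    simp only [AddMonoidHom.mem_ker, AddMonoidHom.mem_range]
    constructor
    · intro hz
      have h1 : HomQuotAux.chi d lam hlam hspan (HomQuotAux.invLfun d lam z) = 1 := by
        rw [hΘ] at hz
        exact ofMul_eq_zero.mp hz
      have h2 : ∀ k, ∃ m : ℤ, HomQuotAux.invLfun d lam z k = m * (2 * Real.pi) := by
        intro k
        have h3 := DFunLike.congr_fun h1 ⟨lam k, hmem k⟩
        rw [HomQuotAux.chi_apply_lam, AddChar.one_apply] at h3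
        exact Circle.exp_eq_one.mp h3
      choose m hm using h2
      refine ⟨m, ?_⟩
      rw [hg]
      have ht : (fun k => 2 * Real.pi * (m k : ℝ)) = HomQuotAux.invLfun d lam z := by
        funext k
        rw [hm k]
        ring
      rw [ht, HomQuotAux.right_inv d lam hlam]
    · rintro ⟨n, rfl⟩
      rw [hg, hΘ, HomQuotAux.left_inv d lam hlam]
      have h4 : HomQuotAux.chi d lam hlam hspan (fun k => 2 * Real.pi * (n k : ℝ)) = 1 := by
        apply HomQuotAux.char_ext d lam
        intro k hk
        rw [HomQuotAux.chi_apply_lam, AddChar.one_apply]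
        exact Circle.exp_two_pi_mul_int (n k)
      rw [h4]
      rfl
  -- assemble the isomorphism
  let e1 := QuotientAddGroup.quotientKerEquivOfSurjective Θ hsurj
  let e0 := QuotientAddGroup.quotientAddEquivOfEq hker
  refine ⟨e1.symm.trans e0, ?_⟩
  intro ρ s hre hexp
  have hst : cmap d lam s = HomQuotAux.Lfun d lam (fun k => (s k).im) :=
    HomQuotAux.cmap_eq_Lfun d lam s hre
  have hρ : Additive.ofMul ρ = Θ (HomQuotAux.Lfun d lam (fun k => (s k).im)) := by
    rw [hΘL]
    have h : ρ = HomQuotAux.chi d lam hlam hspan (fun k => (s k).im) := by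
      apply HomQuotAux.char_ext d lam
      intro k hk
      rw [HomQuotAux.chi_apply_lam]
      apply Subtype.ext
      rw [Circle.coe_exp, ← hexp k]
      refine congrArg Complex.exp ?_
      apply Complex.ext <;> simp [hre k]
    rw [← h]
  rw [hρ, hst]
  have he1 : e1 (QuotientAddGroup.mk (HomQuotAux.Lfun d lam (fun k => (s k).im)))
      = Θ (HomQuotAux.Lfun d lam (fun k => (s k).im)) :=
    QuotientAddGroup.kerLift_mk Θ _
  rw [← he1, AddEquiv.trans_apply, AddEquiv.symm_apply_apply]
  exact QuotientAddGroup.quotientAddEquivOfEq_mk hker _
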